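/- For all i ≥ 1 and 0 ≤ k ≤ i, and all r > 0, the functions ψ_j satisfy the Leibniz-type formula ψ_{i−k}(r) = Σ_{m=0}^{k} C(k,m) · (∏_{ℓ=i+1−(k−m)}^{i} −(2ℓ−1)) · r^{2m} · ψ_{i+m}(r), where C(k,m) is the binomial coefficient and empty products equal 1. -/

import Mathlib

/-- ψ₀(r) = e^{-r}, ψ_{j+1}(r) = -(1/r)·ψ_j'(r). -/
noncomputable def psi : ℕ → ℝ → ℝ
  | 0 => fun r => Real.exp (-r)
  | (j+1) => fun r => -(1/r) * deriv (psi j) r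

lemma psi_contDiffOn (j : ℕ) : ContDiffOn ℝ ⊤ (psi j) (Set.Ioi (0:ℝ)) := by
  induction j with
  | zero =>
    exact (Real.contDiff_exp.comp contDiff_neg).contDiffOn
  | succ j ih =>
    show ContDiffOn ℝ ⊤ (fun r => -(1/r) * deriv (psi j) r) (Set.Ioi 0)
    apply ContDiffOn.mul
    · exact ((contDiffOn_id.inv (fun x hx => ne_of_gt hx)).neg).congr
        (fun x _ => by simp)
    · exact ih.deriv_of_isOpen isOpen_Ioi le_top

lemma psi_hasDerivAt (j : ℕ) {r : ℝ} (hr : 0 < r) :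
    HasDerivAt (psi j) (-r * psi (j+1) r) r := by
  have hd : DifferentiableAt ℝ (psi j) r :=
    ((psi_contDiffOn j).differentiableOn (by simp)).differentiableAt (isOpen_Ioi.mem_nhds hr)
  have h := hd.hasDerivAt
  have : -r * psi (j+1) r = deriv (psi j) r := by
    show -r * (-(1/r) * deriv (psi j) r) = _
    field_simp
  rwa [this]

lemma deriv_psi0 : deriv (psi 0) = fun x => -Real.exp (-x) := by
  funext x
  have : HasDerivAt (fun x : ℝ => Real.exp (-x)) (Real.exp (-x) * (-1)) x :=
    (hasDerivAt_neg x).exp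
  show deriv (fun x : ℝ => Real.exp (-x)) x = _
  rw [this.deriv]; ring

lemma psi1_eq : psi 1 = fun x => Real.exp (-x) / x := by
  funext x
  show -(1/x) * deriv (psi 0) x = _
  rw [deriv_psi0]; ring

lemma psi1_val {r : ℝ} (hr : 0 < r) : psi 1 r = Real.exp (-r) / r := by rw [psi1_eq]

lemma psi2_val {r : ℝ} (hr : 0 < r) :
    psi 2 r = Real.exp (-r) * (r + 1) / r ^ 3 := by
  have hD : HasDerivAt (fun x : ℝ => Real.exp (-x) / x)
      ((Real.exp (-r) * (-1) * r - Real.exp (-r) * 1) / r ^ 2) r :=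
    HasDerivAt.div ((hasDerivAt_neg r).exp) (hasDerivAt_id r) hr.ne'
  show -(1/r) * deriv (psi 1) r = _
  rw [psi1_eq, hD.deriv]
  field_simp
  ring

lemma psi_rec (j : ℕ) {r : ℝ} (hr : 0 < r) :
    psi j r = -(2 * (j:ℝ) + 1) * psi (j+1) r + r^2 * psi (j+2) r := by
  induction j generalizing r with
  | zero =>
    rw [psi1_val hr, psi2_val hr]
    show Real.exp (-r) = _
    field_simp
    ring
  | succ j ih =>
    have hEq : psi j =ᶠ[nhds r]
        (fun x => -(2 * (j:ℝ) + 1) * psi (j+1) x + x^2 * psi (j+2) x) :=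
      Filter.eventuallyEq_of_mem (isOpen_Ioi.mem_nhds hr) (fun x hx => ih hx)
    have hR : HasDerivAt (fun x => -(2 * (j:ℝ) + 1) * psi (j+1) x + x^2 * psi (j+2) x)
        (-(2 * (j:ℝ) + 1) * (-r * psi (j+2) r) +
          ((2 * r) * psi (j+2) r + r^2 * (-r * psi (j+3) r))) r := by
      have h1 : HasDerivAt (fun x : ℝ => x^2) (2 * r) r := by
        simpa using hasDerivAt_pow 2 r
      exact ((psi_hasDerivAt (j+1) hr).const_mul _).add (h1.mul (psi_hasDerivAt (j+2) hr))
    have hL : HasDerivAt (psi j) (-r * psi (j+1) r) r := psi_hasDerivAt j hr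
    have hU := (hR.congr_of_eventuallyEq hEq).unique hL
    have h2 : (-r) * psi (j+1) r =
        (-r) * (-(2 * ((j:ℝ)+1) + 1) * psi (j+2) r + r^2 * psi (j+3) r) := by
      linear_combination -hU
    have := mul_left_cancel₀ (neg_ne_zero.mpr hr.ne') h2
    push_cast
    linarith [this]

lemma sum_shuffle (k : ℕ) (A B C : ℕ → ℝ)
    (h0 : C 0 = A 0) (hlast : C (k+1) = B k)
    (hmid : ∀ m ∈ Finset.range k, C (m+1) = A (m+1) + B m) :
    (∑ m ∈ Finset.range (k+1), A m) + (∑ m ∈ Finset.range (k+1), B m)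
      = ∑ m ∈ Finset.range (k+1+1), C m := by
  rw [Finset.sum_range_succ' C (k+1), Finset.sum_range_succ (fun m => C (m+1)) k,
      Finset.sum_congr rfl hmid, Finset.sum_add_distrib,
      Finset.sum_range_succ' A k, Finset.sum_range_succ B k, h0, hlast]
  ring

lemma psi_aux : ∀ k i : ℕ, 1 ≤ i → k ≤ i → ∀ r : ℝ, 0 < r →
    psi (i - k) r =
      ∑ m ∈ Finset.range (k+1), (k.choose m : ℝ) *
        (∏ ℓ ∈ Finset.Icc (i + 1 - (k - m)) i, -(2 * (ℓ : ℝ) - 1)) *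
        r ^ (2 * m) * psi (i + m) r := by
  intro k
  induction k with
  | zero =>
    intro i hi hk r hr
    have h : Finset.Icc (i + 1 - (0 - 0)) i = ∅ := Finset.Icc_eq_empty (by omega)
    simp [h]
  | succ k IH =>
    intro i hi hk r hr
    have hk' : k ≤ i := by omega
    have IH1 := IH i hi hk' r hr
    have IH2 := IH (i+1) (by omega) (by omega) r hr
    have hrec := psi_rec (i - (k+1)) hr
    have e1 : i - (k+1) + 1 = i - k := by omega
    have e2 : i - (k+1) + 2 = i + 1 - k := by omega
    have e3 : (((i - (k+1)) : ℕ) : ℝ) = (i:ℝ) - (k:ℝ) - 1 := by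
      rw [Nat.cast_sub hk]; push_cast; ring
    rw [e1, e2, e3, IH1, IH2] at hrec
    rw [hrec, Finset.mul_sum, Finset.mul_sum]
    refine sum_shuffle k _ _ _ ?_ ?_ ?_
    · -- C 0 = A 0
      have hIcc0 : Finset.Icc (i+1-(k+1-0)) i = insert (i-k) (Finset.Icc (i+1-(k-0)) i) := by
        ext x; simp only [Finset.mem_Icc, Finset.mem_insert]; omega
      rw [hIcc0, Finset.prod_insert (by simp only [Finset.mem_Icc]; omega),
          Nat.cast_sub hk']
      simp only [Nat.choose_zero_right, Nat.cast_one, pow_zero, Nat.add_zero]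
      push_cast
      ring
    · -- C (k+1) = B k
      have h1 : Finset.Icc (i+1-(k+1-(k+1))) i = ∅ := Finset.Icc_eq_empty (by omega)
      have h2 : Finset.Icc (i+1+1-(k-k)) (i+1) = ∅ := Finset.Icc_eq_empty (by omega)
      rw [h1, h2, show i + (k+1) = i+1+k from by omega]
      simp only [Nat.choose_self, Nat.cast_one, Finset.prod_empty]
      ring
    · -- middle terms
      intro m hm
      have hmk : m < k := Finset.mem_range.mp hm
      have hQ1 : Finset.Icc (i+1-(k+1-(m+1))) i
          = insert (i+1+m-k) (Finset.Icc (i+1-(k-(m+1))) i) := by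
        ext x; simp only [Finset.mem_Icc, Finset.mem_insert]; omega
      have hQ2 : Finset.Icc (i+1+1-(k-m)) (i+1)
          = insert (i+1) (Finset.Icc (i+1-(k-(m+1))) i) := by
        ext x; simp only [Finset.mem_Icc, Finset.mem_insert]; omega
      have hch : ((k.choose (m+1) : ℝ)) * ((m:ℝ)+1) = (k.choose m : ℝ) * ((k:ℝ) - m) := by
        have h := Nat.choose_succ_right_eq k m
        have hcast : ((k.choose (m+1) : ℝ)) * ((m:ℝ)+1) = (k.choose m : ℝ) * ((k - m : ℕ) : ℝ) := by
          exact_mod_cast congrArg (fun n : ℕ => (n : ℝ)) h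
        rw [hcast, Nat.cast_sub (le_of_lt hmk)]
      have hc1 : ((i+1+m-k : ℕ) : ℝ) = (i:ℝ)+1+(m:ℝ)-(k:ℝ) := by
        rw [Nat.cast_sub (by omega)]; push_cast; ring
      rw [hQ1, Finset.prod_insert (by simp only [Finset.mem_Icc]; omega),
          hQ2, Finset.prod_insert (by simp only [Finset.mem_Icc]; omega),
          Nat.choose_succ_succ, hc1, show i+1+m = i+(m+1) from by omega]
      push_cast
      linear_combination (-2 * (∏ ℓ ∈ Finset.Icc (i+1-(k-(m+1))) i, -(2*(ℓ:ℝ)-1))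
        * r^(2*(m+1)) * psi (i+(m+1)) r) * hch

theorem psi_leibniz_formula (i k : ℕ) (hi : 1 ≤ i) (hk : k ≤ i) (r : ℝ) (hr : 0 < r) :
    psi (i - k) r =
      ∑ m ∈ Finset.range (k+1), (k.choose m : ℝ) *
        (∏ ℓ ∈ Finset.Icc (i + 1 - (k - m)) i, -(2 * (ℓ : ℝ) - 1)) *
        r ^ (2 * m) * psi (i + m) r := by
  exact psi_aux k i hi hk r hr
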